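/- Fix real numbers β₀, β₁, β₂ ≥ 0, ε > 0, q ≥ 1, and linear weights d₀, d₁, d₂ > 0 with d₀ + d₁ + d₂ = 1. For p > 0 define τ(p) = (1/p)|ln((1 + β₀)/(1 + β₂))| and α_s(p) = d_s(1 + (τ(p)/(β_s + ε))^q) for s = 0, 1, 2. Then for each s, the WENO-ZL nonlinear weight ω_s(p) = α_s(p)/(α₀(p) + α₁(p) + α₂(p)) tends to the linear weight d_s as p → ∞. -/

import Mathlib

open Filter Topology

/-- As the tuner `p → ∞`, each WENO-ZL nonlinear weight tends to the corresponding
linear weight. -/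
theorem stmt18 (β d : Fin 3 → ℝ) (hβ : ∀ s, 0 ≤ β s)
    (ε q : ℝ) (hε : 0 < ε) (hq : 1 ≤ q)
    (hd : ∀ s, 0 < d s) (hdsum : ∑ s, d s = 1) :
    ∀ s : Fin 3,
      Tendsto (fun p : ℝ =>
          (d s * (1 + ((1 / p) * |Real.log ((1 + β 0) / (1 + β 2))| / (β s + ε)) ^ q))
            / (∑ r : Fin 3,
                d r * (1 + ((1 / p) * |Real.log ((1 + β 0) / (1 + β 2))| / (β r + ε)) ^ q)))
        atTop (𝓝 (d s)) := by
  set c : ℝ := |Real.log ((1 + β 0) / (1 + β 2))| with hc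
  have hq0 : 0 < q := lt_of_lt_of_le one_pos hq
  have hterm : ∀ r : Fin 3,
      Tendsto (fun p : ℝ => ((1 / p) * c / (β r + ε)) ^ q) atTop (𝓝 0) := by
    intro r
    have hbase : Tendsto (fun p : ℝ => (1 / p) * c / (β r + ε)) atTop (𝓝 0) := by
      have h1 : Tendsto (fun p : ℝ => 1 / p) atTop (𝓝 0) := by
        simpa using tendsto_inv_atTop_zero
      have := (h1.mul_const c).div_const (β r + ε)
      simpa using this
    have hcont : ContinuousAt (fun x : ℝ => x ^ q) 0 :=
      Real.continuousAt_rpow_const 0 q (Or.inr hq0.le)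
    have := hcont.tendsto.comp hbase
    simpa [Real.zero_rpow (ne_of_gt hq0), Function.comp_def] using this
  have hnum : ∀ r : Fin 3,
      Tendsto (fun p : ℝ => d r * (1 + ((1 / p) * c / (β r + ε)) ^ q)) atTop (𝓝 (d r)) := by
    intro r
    have := ((tendsto_const_nhds : Tendsto (fun _ : ℝ => (1:ℝ)) atTop (𝓝 1)).add (hterm r)).const_mul (d r)
    simpa using this
  have hden : Tendsto (fun p : ℝ =>
      ∑ r : Fin 3, d r * (1 + ((1 / p) * c / (β r + ε)) ^ q)) atTop (𝓝 1) := by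
    have := tendsto_finset_sum Finset.univ (fun r _ => hnum r)
    simpa [hdsum] using this
  intro s
  have := (hnum s).div hden one_ne_zero
  simpa [Pi.div_def] using this
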